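/- Let P be a finite set in ℝ³ and suppose v = (x,y,α,θ₁,θ₂,φ₁,φ₂) ∈ ℝ⁷ satisfies (T_{x,y} ∘ R_α ∘ M_{θ₁,φ₁})(P) ⊆ interior(convexHull(M_{θ₂,φ₂}(P))). Then there exists ε > 0 such that every v' ∈ ℝ⁷ with ‖v' − v‖ < ε also satisfies the corresponding inclusion; i.e., the set of solutions to Rupert's problem is open in ℝ⁷. -/

import Mathlib

open Real

/-- The projection `M_{θ,φ} : ℝ³ → ℝ²` onto the plane orthogonal to the
direction `X(θ,φ)`, given by the matrix with rows `(−sin θ, cos θ, 0)` and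
`(−cos θ cos φ, −sin θ cos φ, sin φ)`. -/
noncomputable def Mproj (θ φ : ℝ) (v : EuclideanSpace ℝ (Fin 3)) : EuclideanSpace ℝ (Fin 2) :=
  !₂[-Real.sin θ * v 0 + Real.cos θ * v 1,
    -(Real.cos θ * Real.cos φ) * v 0 - Real.sin θ * Real.cos φ * v 1 + Real.sin φ * v 2]

/-- Rotation of the plane by angle `α` about the origin. -/
noncomputable def Rrot (α : ℝ) (p : EuclideanSpace ℝ (Fin 2)) : EuclideanSpace ℝ (Fin 2) :=
  !₂[Real.cos α * p 0 - Real.sin α * p 1, Real.sin α * p 0 + Real.cos α * p 1]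

/-- Translation of the plane by the vector `(x, y)`. -/
noncomputable def Ttrans (x y : ℝ) (p : EuclideanSpace ℝ (Fin 2)) : EuclideanSpace ℝ (Fin 2) :=
  !₂[p 0 + x, p 1 + y]

/-- A parameter vector `v = (x, y, α, θ₁, θ₂, φ₁, φ₂) ∈ ℝ⁷` is a solution to
Rupert's problem for the finite set `P ⊂ ℝ³`. -/
noncomputable def IsRupertSolution (P : Set (EuclideanSpace ℝ (Fin 3)))
    (v : EuclideanSpace ℝ (Fin 7)) : Prop :=
  ∀ p ∈ P, Ttrans (v 0) (v 1) (Rrot (v 2) (Mproj (v 3) (v 5) p)) ∈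
    interior (convexHull ℝ (Mproj (v 4) (v 6) '' P))

open Pointwise in
/-- If a ball of radius `δ` around `q` is contained in the `η`-thickening of a
nonempty closed convex set `A`, then the ball of radius `δ - η` is contained in
`A` itself.  Proved by metric projection onto `A`. -/
lemma rupert_aux_ballSub {A : Set (EuclideanSpace ℝ (Fin 2))} (hA : Convex ℝ A) (hcl : IsClosed A)
    (hne : A.Nonempty) (q : EuclideanSpace ℝ (Fin 2)) (δ η : ℝ) (hη : 0 ≤ η)
    (h : Metric.ball q δ ⊆ A + Metric.closedBall (0 : EuclideanSpace ℝ (Fin 2)) η) :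
    Metric.ball q (δ - η) ⊆ A := by
  intro z hz
  by_contra hzA
  obtain ⟨a, haA, ha⟩ := exists_norm_eq_iInf_of_complete_convex hne hcl.isComplete hA z
  have hproj := (norm_eq_iInf_iff_real_inner_le_zero hA haA).1 ha
  set d := ‖z - a‖ with hd
  have hd0 : 0 < d := by
    have : z ≠ a := fun h' => hzA (h' ▸ haA)
    simpa [hd] using sub_ne_zero.2 this
  rw [Metric.mem_ball] at hz
  set t := (δ - η - dist z q) / 2 with ht
  have ht0 : 0 < t := by rw [ht]; linarith
  set w := z + ((η + t) / d) • (z - a) with hw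
  have hwz : dist w z = η + t := by
    have h' : w - z = ((η + t) / d) • (z - a) := by rw [hw]; abel
    rw [dist_eq_norm, h', norm_smul, Real.norm_eq_abs,
      abs_of_nonneg (by positivity : (0:ℝ) ≤ (η + t) / d), ← hd, div_mul_cancel₀ _ hd0.ne']
  have hwball : w ∈ Metric.ball q δ := by
    rw [Metric.mem_ball]
    calc dist w q ≤ dist w z + dist z q := dist_triangle _ _ _
    _ < δ := by rw [hwz]; linarith
  obtain ⟨a', ha'A, b, hb, hab⟩ := Set.mem_add.1 (h hwball)
  rw [Metric.mem_closedBall, dist_zero_right] at hb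
  have h1 : (inner ℝ (z - a) (w - a) : ℝ) = (1 + (η + t) / d) * (d ^ 2) := by
    have h' : w - a = (1 + (η + t) / d) • (z - a) := by
      rw [hw]; module
    rw [h', real_inner_smul_right, real_inner_self_eq_norm_sq, ← hd]
  have h2 : (inner ℝ (z - a) (w - a) : ℝ) ≤ d * η := by
    have h' : w - a = (a' - a) + b := by rw [← hab]; abel
    rw [h', inner_add_right]
    have i1 : inner ℝ (z - a) (a' - a) ≤ (0:ℝ) := hproj a' ha'A
    have i2 : (inner ℝ (z - a) b : ℝ) ≤ d * η := by
      calc (inner ℝ (z - a) b : ℝ) ≤ ‖z - a‖ * ‖b‖ := real_inner_le_norm _ _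
      _ ≤ d * η := mul_le_mul_of_nonneg_left hb (norm_nonneg _)
    linarith
  rw [h1] at h2
  have hdiv : (1 + (η + t) / d) * d ^ 2 = d ^ 2 + (η + t) * d := by field_simp
  nlinarith [hd0, ht0]

open Pointwise in
/-- Stability of membership in the interior of the convex hull of a finite set
under small perturbations of both the point and the set. -/
lemma rupert_aux_stable {S : Set (EuclideanSpace ℝ (Fin 2))} (_hS : S.Finite)
    (q : EuclideanSpace ℝ (Fin 2)) (hq : q ∈ interior (convexHull ℝ S)) :
    ∃ η > 0, ∀ (S' : Set (EuclideanSpace ℝ (Fin 2))) (q' : EuclideanSpace ℝ (Fin 2)),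
      S'.Finite → S'.Nonempty →
      (∀ s ∈ S, ∃ s' ∈ S', dist s s' < η) → dist q' q < η →
      q' ∈ interior (convexHull ℝ S') := by
  obtain ⟨δ, hδ0, hball⟩ := Metric.mem_nhds_iff.1 (mem_interior_iff_mem_nhds.1 hq)
  refine ⟨δ / 3, by linarith, fun S' q' hS'fin hS'ne hnear hq' => ?_⟩
  set A := convexHull ℝ S' with hA
  have hAconv : Convex ℝ A := convex_convexHull ℝ S'
  have hAcl : IsClosed A := (hS'fin.isCompact_convexHull ℝ).isClosed
  have hAne : A.Nonempty := hS'ne.mono (subset_convexHull ℝ S')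
  have hsub : Metric.ball q δ ⊆ A + Metric.closedBall (0 : EuclideanSpace ℝ (Fin 2)) (δ / 3) := by
    refine hball.trans (convexHull_min ?_ (hAconv.add (convex_closedBall _ _)))
    intro s hs
    obtain ⟨s', hs'S', hd⟩ := hnear s hs
    refine Set.mem_add.2 ⟨s', subset_convexHull ℝ S' hs'S', s - s', ?_, by abel⟩
    rw [Metric.mem_closedBall, dist_zero_right, ← dist_eq_norm]
    exact hd.le
  have hsub2 : Metric.ball q (δ - δ / 3) ⊆ A :=
    rupert_aux_ballSub hAconv hAcl hAne q δ (δ / 3) (by linarith) hsub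
  have hball' : Metric.ball q' (δ / 3) ⊆ A := by
    intro z hz
    apply hsub2
    rw [Metric.mem_ball] at hz ⊢
    calc dist z q ≤ dist z q' + dist q' q := dist_triangle _ _ _
    _ < δ - δ / 3 := by linarith
  exact interior_maximal hball' Metric.isOpen_ball (Metric.mem_ball_self (by linarith))

lemma rupert_aux_contF (p : EuclideanSpace ℝ (Fin 3)) :
    Continuous fun v : EuclideanSpace ℝ (Fin 7) =>
      Ttrans (v 0) (v 1) (Rrot (v 2) (Mproj (v 3) (v 5) p)) := by
  unfold Ttrans Rrot Mproj
  refine (PiLp.continuous_toLp 2 _).comp (continuous_pi ?_)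
  intro k
  fin_cases k <;> simp <;> fun_prop

lemma rupert_aux_contG (p : EuclideanSpace ℝ (Fin 3)) :
    Continuous fun v : EuclideanSpace ℝ (Fin 7) => Mproj (v 4) (v 6) p := by
  unfold Mproj
  refine (PiLp.continuous_toLp 2 _).comp (continuous_pi ?_)
  intro k
  fin_cases k <;> simp <;> fun_prop

/-- The set of solutions to Rupert's problem is open in `ℝ⁷`: around any
solution there is an `ε`-ball of solutions. -/
theorem rupert_solutions_open (P : Set (EuclideanSpace ℝ (Fin 3))) (hfin : P.Finite)
    (v : EuclideanSpace ℝ (Fin 7)) (hv : IsRupertSolution P v) :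
    ∃ ε > 0, ∀ v' : EuclideanSpace ℝ (Fin 7), ‖v' - v‖ < ε → IsRupertSolution P v' := by
  classical
  rcases P.eq_empty_or_nonempty with rfl | hPne
  · exact ⟨1, one_pos, fun v' _ p hp => absurd hp (Set.notMem_empty p)⟩
  set Q := hfin.toFinset with hQ
  have hQmem : ∀ p, p ∈ Q ↔ p ∈ P := fun p => hfin.mem_toFinset
  have hQne : Q.Nonempty := by
    obtain ⟨p, hp⟩ := hPne; exact ⟨p, (hQmem p).2 hp⟩
  have key : ∀ p ∈ P, ∃ ε > 0, ∀ v' : EuclideanSpace ℝ (Fin 7), dist v' v < ε →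
      Ttrans (v' 0) (v' 1) (Rrot (v' 2) (Mproj (v' 3) (v' 5) p)) ∈
        interior (convexHull ℝ (Mproj (v' 4) (v' 6) '' P)) := by
    intro p hp
    obtain ⟨η, hη0, hstab⟩ := rupert_aux_stable (hfin.image _) _ (hv p hp)
    set Φ : EuclideanSpace ℝ (Fin 7) →
        (EuclideanSpace ℝ (Fin 2)) × (Q → EuclideanSpace ℝ (Fin 2)) :=
      fun v' => (Ttrans (v' 0) (v' 1) (Rrot (v' 2) (Mproj (v' 3) (v' 5) p)),
        fun i => Mproj (v' 4) (v' 6) (i : EuclideanSpace ℝ (Fin 3))) with hΦ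
    have hΦc : Continuous Φ :=
      Continuous.prodMk (rupert_aux_contF p) (continuous_pi fun i => rupert_aux_contG _)
    obtain ⟨ε, hε0, hε⟩ := Metric.continuousAt_iff.1 hΦc.continuousAt η hη0
    refine ⟨ε, hε0, fun v' hv' => ?_⟩
    have hΦd := hε hv'
    rw [Prod.dist_eq, max_lt_iff] at hΦd
    obtain ⟨hdf, hdg⟩ := hΦd
    have hdg' := (dist_pi_lt_iff hη0).1 hdg
    refine hstab _ _ (hfin.image _) (hPne.image _) ?_ hdf
    rintro s ⟨p', hp', rfl⟩
    refine ⟨Mproj (v' 4) (v' 6) p', ⟨p', hp', rfl⟩, ?_⟩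
    have := hdg' ⟨p', (hQmem p').2 hp'⟩
    simpa [dist_comm] using this
  choose! ε hεpos hεkey using key
  refine ⟨Q.inf' hQne ε, ?_, fun v' hv' p hp => ?_⟩
  · rw [gt_iff_lt, Finset.lt_inf'_iff]
    exact fun p hp => hεpos p ((hQmem p).1 hp)
  · have hpQ : p ∈ Q := (hQmem p).2 hp
    have hle : Q.inf' hQne ε ≤ ε p := Finset.inf'_le _ hpQ
    have hlt : dist v' v < ε p := by
      rw [dist_eq_norm]; exact lt_of_lt_of_le hv' hle
    exact hεkey p hp v' hlt
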